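/- Let H be the 7×7 toy matrix at g = 2, let J be the 7×7 block-diagonal matrix diag(J₄(7), J₃(7)) consisting of a 4×4 and a 3×3 Jordan block with eigenvalue 7, and let Q be the 7×7 matrix given in the context. Then det(Q) ≠ 0 and H·Q = Q·J. -/
import Mathlib


open Matrix Real

noncomputable def H16 : Matrix (Fin 7) (Fin 7) ℝ :=
  !![1, 0, 2 * Real.sqrt 3, 0, 0, 0, 0;
     0, 3, 0, 2 * Real.sqrt 2, 0, 0, 0;
     -(2 * Real.sqrt 3), 0, 5, 0, 4, 0, 0;
     0, -(2 * Real.sqrt 2), 0, 7, 0, 2 * Real.sqrt 2, 0;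
     0, 0, -4, 0, 9, 0, 2 * Real.sqrt 3;
     0, 0, 0, -(2 * Real.sqrt 2), 0, 11, 0;
     0, 0, 0, 0, -(2 * Real.sqrt 3), 0, 13]

noncomputable def J16 : Matrix (Fin 7) (Fin 7) ℝ :=
  !![7, 1, 0, 0, 0, 0, 0;
     0, 7, 1, 0, 0, 0, 0;
     0, 0, 7, 1, 0, 0, 0;
     0, 0, 0, 7, 0, 0, 0;
     0, 0, 0, 0, 7, 1, 0;
     0, 0, 0, 0, 0, 7, 1;
     0, 0, 0, 0, 0, 0, 7]

noncomputable def Q16 : Matrix (Fin 7) (Fin 7) ℝ :=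
  !![-48, 24, -6, 1, 0, 0, 0;
     0, 8, -4, 1, 8, -4, 1;
     -(48 * Real.sqrt 3), 16 * Real.sqrt 3, -(2 * Real.sqrt 3), 0, 0, 0, 0;
     0, 8 * Real.sqrt 2, -(2 * Real.sqrt 2), 0, 8 * Real.sqrt 2, -(2 * Real.sqrt 2), 0;
     -(48 * Real.sqrt 3), 8 * Real.sqrt 3, 0, 0, 0, 0, 0;
     0, 8, 0, 0, 8, 0, 0;
     -48, 0, 0, 0, 0, 0, 0]


private lemma cv7_1 (x : ℝ) (u : Fin 6 → ℝ) : Matrix.vecCons x u 1 = u 0 := rfl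
private lemma cv7_2 (x : ℝ) (u : Fin 6 → ℝ) : Matrix.vecCons x u 2 = u 1 := rfl
private lemma cv7_3 (x : ℝ) (u : Fin 6 → ℝ) : Matrix.vecCons x u 3 = u 2 := rfl
private lemma cv7_4 (x : ℝ) (u : Fin 6 → ℝ) : Matrix.vecCons x u 4 = u 3 := rfl
private lemma cv7_5 (x : ℝ) (u : Fin 6 → ℝ) : Matrix.vecCons x u 5 = u 4 := rfl
private lemma cv7_6 (x : ℝ) (u : Fin 6 → ℝ) : Matrix.vecCons x u 6 = u 5 := rfl
private lemma cv6_1 (x : ℝ) (u : Fin 5 → ℝ) : Matrix.vecCons x u 1 = u 0 := rfl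
private lemma cv6_2 (x : ℝ) (u : Fin 5 → ℝ) : Matrix.vecCons x u 2 = u 1 := rfl
private lemma cv6_3 (x : ℝ) (u : Fin 5 → ℝ) : Matrix.vecCons x u 3 = u 2 := rfl
private lemma cv6_4 (x : ℝ) (u : Fin 5 → ℝ) : Matrix.vecCons x u 4 = u 3 := rfl
private lemma cv6_5 (x : ℝ) (u : Fin 5 → ℝ) : Matrix.vecCons x u 5 = u 4 := rfl
private lemma cv5_1 (x : ℝ) (u : Fin 4 → ℝ) : Matrix.vecCons x u 1 = u 0 := rfl
private lemma cv5_2 (x : ℝ) (u : Fin 4 → ℝ) : Matrix.vecCons x u 2 = u 1 := rfl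
private lemma cv5_3 (x : ℝ) (u : Fin 4 → ℝ) : Matrix.vecCons x u 3 = u 2 := rfl
private lemma cv5_4 (x : ℝ) (u : Fin 4 → ℝ) : Matrix.vecCons x u 4 = u 3 := rfl
private lemma cv4_1 (x : ℝ) (u : Fin 3 → ℝ) : Matrix.vecCons x u 1 = u 0 := rfl
private lemma cv4_2 (x : ℝ) (u : Fin 3 → ℝ) : Matrix.vecCons x u 2 = u 1 := rfl
private lemma cv4_3 (x : ℝ) (u : Fin 3 → ℝ) : Matrix.vecCons x u 3 = u 2 := rfl
private lemma cv3_1 (x : ℝ) (u : Fin 2 → ℝ) : Matrix.vecCons x u 1 = u 0 := rfl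
private lemma cv3_2 (x : ℝ) (u : Fin 2 → ℝ) : Matrix.vecCons x u 2 = u 1 := rfl
private lemma cv2_1 (x : ℝ) (u : Fin 1 → ℝ) : Matrix.vecCons x u 1 = u 0 := rfl


noncomputable def R16aux : Matrix (Fin 7) (Fin 7) ℝ :=
  !![0, 0, 0, 0, 0, 0, -1/48;
  0, 0, 0, 0, (1/24)*Real.sqrt 3, 0, -1/8;
  0, 0, (-1/6)*Real.sqrt 3, 0, (1/3)*Real.sqrt 3, 0, -1/2;
  1, 0, (-1)*Real.sqrt 3, 0, (1)*Real.sqrt 3, 0, -1;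
  0, 0, 0, 0, (-1/24)*Real.sqrt 3, 1/8, 1/8;
  0, 0, (1/6)*Real.sqrt 3, (-1/4)*Real.sqrt 2, (-1/3)*Real.sqrt 3, 1/2, 1/2;
  -1, 1, (1)*Real.sqrt 3, (-1)*Real.sqrt 2, (-1)*Real.sqrt 3, 1, 1]

set_option maxHeartbeats 2000000 in
set_option maxRecDepth 4000 in
private lemma QR16 : Q16 * R16aux = 1 := by
  have h2 : Real.sqrt 2 * Real.sqrt 2 = 2 := Real.mul_self_sqrt (by norm_num)
  have h3 : Real.sqrt 3 * Real.sqrt 3 = 3 := Real.mul_self_sqrt (by norm_num)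
  ext i j
  fin_cases i <;> fin_cases j <;>
    simp [Q16, R16aux, Matrix.mul_apply, Fin.sum_univ_succ, Matrix.one_apply,
      cv7_1, cv7_2, cv7_3, cv7_4, cv7_5, cv7_6, cv6_1, cv6_2, cv6_3, cv6_4, cv6_5, cv5_1, cv5_2, cv5_3, cv5_4, cv4_1, cv4_2, cv4_3, cv3_1, cv3_2, cv2_1] <;>
    nlinarith [h2, h3]

set_option maxHeartbeats 2000000 in
set_option maxRecDepth 4000 in
private lemma HQ16 : H16 * Q16 = Q16 * J16 := by
  have h2 : Real.sqrt 2 * Real.sqrt 2 = 2 := Real.mul_self_sqrt (by norm_num)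
  have h3 : Real.sqrt 3 * Real.sqrt 3 = 3 := Real.mul_self_sqrt (by norm_num)
  ext i j
  fin_cases i <;> fin_cases j <;>
    simp [H16, Q16, J16, Matrix.mul_apply, Fin.sum_univ_succ,
      cv7_1, cv7_2, cv7_3, cv7_4, cv7_5, cv7_6, cv6_1, cv6_2, cv6_3, cv6_4, cv6_5, cv5_1, cv5_2, cv5_3, cv5_4, cv4_1, cv4_2, cv4_3, cv3_1, cv3_2, cv2_1] <;>
    nlinarith [h2, h3]

theorem stmt_16 : Q16.det ≠ 0 ∧ H16 * Q16 = Q16 * J16 := by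
  refine ⟨?_, HQ16⟩
  have hd : Q16.det * R16aux.det = 1 := by
    rw [← Matrix.det_mul, QR16, Matrix.det_one]
  exact left_ne_zero_of_mul_eq_one hd
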